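/- Let k, l, m, n be nonnegative integers with n < k < l < m (facet lying below the diagonal, obtained from the above-diagonal case by swapping n↔k and m↔l), and let g divide gcd(m-k, l-n) with g ≥ 1. If (n, l) ≠ (0, 1), then (ml - nk)(ml - nk + k - m + n - l) + g²(n-m)(k-l) > 0. -/

import Mathlib

/-- Positivity of F for a facet below the diagonal that is not a `B₁`-facet
with respect to `y`. -/
theorem stmt13 (k l m n g : ℤ) (hn : 0 ≤ n)
    (hnk : n < k) (hkl : k < l) (hlm : l < m)
    (hg1 : 1 ≤ g) (hgdvd : g ∣ (Int.gcd (m - k) (l - n) : ℤ))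
    (hB : ¬(n = 0 ∧ l = 1)) :
    0 < (m * l - n * k) * (m * l - n * k + k - m + n - l)
          + g ^ 2 * (n - m) * (k - l) := by
  obtain ⟨a, ha⟩ : g ∣ (m - k) := hgdvd.trans (Int.gcd_dvd_left _ _)
  obtain ⟨b, hb⟩ : g ∣ (l - n) := hgdvd.trans (Int.gcd_dvd_right _ _)
  have ha1 : 1 ≤ a := by
    by_contra h
    push_neg at h
    nlinarith
  have hb1 : 1 ≤ b := by
    by_contra h
    push_neg at h
    nlinarith
  have key : (m * l - n * k) * (m * l - n * k + k - m + n - l)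
      + g ^ 2 * (n - m) * (k - l)
      = g ^ 2 * ((n*a + k*b + g*a*b) * ((n*a + k*b + g*a*b) - a - b)
          + (k - n + g*a) * (n + g*b - k)) := by
    have hm : m = k + g * a := by linarith
    have hl : l = n + g * b := by linarith
    subst hm hl
    ring
  rw [key]
  have hS1 : a + b ≤ n*a + k*b + g*a*b := by
    nlinarith [mul_nonneg hn (by linarith : (0:ℤ) ≤ a),
      mul_nonneg (by linarith : (0:ℤ) ≤ k - 1) (by linarith : (0:ℤ) ≤ b),
      mul_nonneg (mul_nonneg (by linarith : (0:ℤ) ≤ g - 1) (by linarith : (0:ℤ) ≤ a)) (by linarith : (0:ℤ) ≤ b),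
      mul_nonneg (by linarith : (0:ℤ) ≤ a) (by linarith : (0:ℤ) ≤ b - 1)]
  have hS0 : 0 < n*a + k*b + g*a*b := by linarith
  have h3 : 0 < (k - n + g*a) * (n + g*b - k) := by
    apply mul_pos <;> nlinarith
  have h4 : 0 ≤ (n*a + k*b + g*a*b) * ((n*a + k*b + g*a*b) - a - b) :=
    mul_nonneg (by linarith) (by linarith)
  have hg2 : (0:ℤ) < g ^ 2 := by positivity
  nlinarith
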